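/- arXiv:0902.0742 — 4 statements merged into one kernel-verified Lean document; each statement's English description precedes it below -/
import Mathlib

section
/- If P is a transitive relation (P = Tr P) and Q is a relation avoiding the set X (Q = Q^{-X}), then restricting the transitive closure of P ∪ Q away from X commutes with the closure: (Tr(P ∪ Q))^{-X} = Tr((P ∪ Q)^{-X}). -/
variable {α : Type*}

def Dom (R : Set (α × α)) : Set α := {x | ∃ y, (x, y) ∈ R ∨ (y, x) ∈ R}

def ReflRel (R : Set (α × α)) : Prop := ∀ x ∈ Dom R, (x, x) ∈ R

def TransRel (R : Set (α × α)) : Prop :=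
  ∀ x y z, (x, y) ∈ R → (y, z) ∈ R → (x, z) ∈ R

def IsPre (R : Set (α × α)) : Prop := ReflRel R ∧ TransRel R

def Tr (R : Set (α × α)) : Set (α × α) :=
  {p | ∀ S : Set (α × α), IsPre S → Dom S = Dom R → R ⊆ S → p ∈ S}

/-- `R^{-X}`: the pairs of `R` both of whose components avoid `X`. -/
def Res (R : Set (α × α)) (X : Set α) : Set (α × α) :=
  {p ∈ R | p.1 ∉ X ∧ p.2 ∉ X}

def toRel (R : Set (α × α)) : α → α → Prop := fun a b => (a, b) ∈ R

def TrSet (R : Set (α × α)) : Set (α × α) :=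
  {p | (p.1 = p.2 ∧ p.1 ∈ Dom R) ∨ Relation.TransGen (toRel R) p.1 p.2}

lemma transGen_mem_dom {R : Set (α × α)} {a b : α}
    (h : Relation.TransGen (toRel R) a b) : a ∈ Dom R ∧ b ∈ Dom R := by
  induction h with
  | single h => exact ⟨⟨_, Or.inl h⟩, ⟨_, Or.inr h⟩⟩
  | tail _ h ih => exact ⟨ih.1, ⟨_, Or.inr h⟩⟩

lemma dom_trSet (R : Set (α × α)) : Dom (TrSet R) = Dom R := by
  ext x
  constructor
  · rintro ⟨y, h | h⟩ <;> rcases h with ⟨he, hd⟩ | htg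
    · exact hd
    · exact (transGen_mem_dom htg).1
    · exact (show (y:α) = x from he) ▸ (hd : y ∈ Dom R)
    · exact (transGen_mem_dom htg).2
  · intro hx
    exact ⟨x, Or.inl (Or.inl ⟨rfl, hx⟩)⟩

lemma trSet_trans (R : Set (α × α)) : TransRel (TrSet R) := by
  rintro x y z h1 h2
  rcases h1 with ⟨(he : x = y), (hd : x ∈ Dom R)⟩ | h1 <;>
    rcases h2 with ⟨(he2 : y = z), hd2⟩ | h2
  · exact Or.inl ⟨he.trans he2, hd⟩
  · subst he; exact Or.inr h2
  · subst he2; exact Or.inr h1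
  · exact Or.inr (h1.trans h2)

lemma trSet_refl (R : Set (α × α)) : ReflRel (TrSet R) := by
  intro x hx
  rw [dom_trSet] at hx
  exact Or.inl ⟨rfl, hx⟩

lemma tr_eq (R : Set (α × α)) : Tr R = TrSet R := by
  apply Set.Subset.antisymm
  · intro p hp
    exact hp (TrSet R) ⟨trSet_refl R, trSet_trans R⟩ (dom_trSet R)
      (fun q hq => Or.inr (Relation.TransGen.single hq))
  · rintro ⟨a, b⟩ hp S ⟨hrefl, htrans⟩ hdom hsub
    rcases hp with ⟨(he : a = b), hd⟩ | htg
    · subst he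
      exact hrefl a (hdom ▸ hd)
    · have key : ∀ {u v : α}, Relation.TransGen (toRel R) u v → (u, v) ∈ S := by
        intro u v h
        induction h with
        | single h => exact hsub h
        | tail _ h ih => exact htrans _ _ _ ih (hsub h)
      exact key htg

lemma transGen_res_avoid {R : Set (α × α)} {X : Set α} {a b : α}
    (h : Relation.TransGen (toRel (Res R X)) a b) : a ∉ X ∧ b ∉ X := by
  induction h with
  | single h => exact ⟨h.2.1, h.2.2⟩
  | tail _ h ih => exact ⟨ih.1, h.2.2⟩

lemma merge_lemma {P Q : Set (α × α)} {X : Set α}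
    (hPt : TransRel P) (hQ : Q = Res Q X) {x y : α}
    (h : Relation.TransGen (toRel (P ∪ Q)) x y) (hy : y ∉ X) :
    (x ∉ X → Relation.TransGen (toRel (Res (P ∪ Q) X)) x y) ∧
    (x ∈ X → ∀ w, w ∉ X → (w, x) ∈ P →
      Relation.TransGen (toRel (Res (P ∪ Q) X)) w y) := by
  have hQav : ∀ {a b : α}, (a, b) ∈ Q → a ∉ X ∧ b ∉ X := by
    intro a b hab
    rw [hQ] at hab
    exact hab.2
  induction h using Relation.TransGen.head_induction_on with
  | single h =>
    rename_i a
    constructor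
    · intro ha
      exact Relation.TransGen.single ⟨h, ha, hy⟩
    · intro ha w hw hwP
      rcases h with h | h
      · exact Relation.TransGen.single ⟨Or.inl (hPt _ _ _ hwP h), hw, hy⟩
      · exact absurd ha (hQav h).1.elim
  | head h' htg ih =>
    rename_i a c
    constructor
    · intro ha
      by_cases hc : c ∈ X
      · rcases h' with h' | h'
        · exact ih.2 hc a ha h'
        · exact absurd hc (hQav h').2
      · exact (ih.1 hc).head ⟨h', ha, hc⟩
    · intro ha w hw hwP
      have hP : (a, c) ∈ P := by
        rcases h' with h' | h'
        · exact h'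
        · exact absurd ha (hQav h').1.elim
      have hwc : (w, c) ∈ P := hPt _ _ _ hwP hP
      by_cases hc : c ∈ X
      · exact ih.2 hc w hw hwc
      · exact (ih.1 hc).head ⟨Or.inl hwc, hw, hc⟩

theorem stmt2 (P Q : Set (α × α)) (X : Set α)
    (hP : P = Tr P) (hQ : Q = Res Q X) :
    Res (Tr (P ∪ Q)) X = Tr (Res (P ∪ Q) X) := by
  have hPt : TransRel P := by
    rw [hP, tr_eq]; exact trSet_trans P
  have hPr : ReflRel P := by
    rw [hP, tr_eq]; exact trSet_refl P
  rw [tr_eq, tr_eq]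
  ext ⟨a, b⟩
  constructor
  · rintro ⟨hd | htg, ha, hb⟩
    · obtain ⟨he, hdm⟩ := hd
      refine Or.inl ⟨he, ?_⟩
      simp only [Dom, Set.mem_setOf_eq] at hdm ⊢
      obtain ⟨z, hz | hz⟩ := hdm
      · rcases hz with hz | hz
        · exact ⟨a, Or.inl ⟨Or.inl (hPr a ⟨z, Or.inl hz⟩), ha, ha⟩⟩
        · have := (hQ ▸ hz : (a, z) ∈ Res Q X)
          exact ⟨z, Or.inl ⟨Or.inr hz, this.2⟩⟩
      · rcases hz with hz | hz
        · exact ⟨a, Or.inl ⟨Or.inl (hPr a ⟨z, Or.inr hz⟩), ha, ha⟩⟩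
        · have := (hQ ▸ hz : (z, a) ∈ Res Q X)
          exact ⟨z, Or.inr ⟨Or.inr hz, this.2⟩⟩
    · exact Or.inr ((merge_lemma hPt hQ htg hb).1 ha)
  · rintro (⟨(he : a = b), hd⟩ | htg)
    · subst he
      obtain ⟨z, hz | hz⟩ := hd
      · exact ⟨Or.inl ⟨rfl, z, Or.inl hz.1⟩, hz.2.1, hz.2.1⟩
      · exact ⟨Or.inl ⟨rfl, z, Or.inr hz.1⟩, hz.2.2, hz.2.2⟩
    · obtain ⟨ha, hb⟩ := transGen_res_avoid htg
      exact ⟨Or.inr (Relation.TransGen.mono (fun p q h => h.1) _ _ htg), ha, hb⟩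
end

section
/- Composition of split preorders is associative: for split preorders P from A to B, Q from B to C, and S from C to D, one has S ∘ (Q ∘ P) = (S ∘ Q) ∘ P. -/
universe u

variable {A B C D : Type u}

/-- The glued relation on `A ⊕ (B ⊕ C)` obtained from a split preorder `P` on
`A ⊕ B` and a split preorder `Q` on `B ⊕ C`. -/
def glue (P : A ⊕ B → A ⊕ B → Prop) (Q : B ⊕ C → B ⊕ C → Prop) :
    A ⊕ (B ⊕ C) → A ⊕ (B ⊕ C) → Prop := fun x y =>
  (∃ u v, P u v ∧ Sum.map id Sum.inl u = x ∧ Sum.map id Sum.inl v = y) ∨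
  (∃ u v, Q u v ∧ Sum.inr u = x ∧ Sum.inr v = y)

/-- Composition of split preorders (diagrammatic order: `scomp P Q = Q ∘ P`):
the transitive closure of the glued relation, restricted to pairs avoiding the
middle layer `B`. -/
def scomp (P : A ⊕ B → A ⊕ B → Prop) (Q : B ⊕ C → B ⊕ C → Prop) :
    A ⊕ C → A ⊕ C → Prop := fun x y =>
  Relation.ReflTransGen (glue P Q) (Sum.map id Sum.inr x) (Sum.map id Sum.inr y)

namespace SPAssoc

/-- Embedding of `A ⊕ (B ⊕ D)` into the big type. -/
def E2 : A ⊕ (B ⊕ D) → A ⊕ (B ⊕ (C ⊕ D)) := Sum.map id (Sum.map id Sum.inr)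

/-- Embedding of `A ⊕ (C ⊕ D)` into the big type. -/
def E4 : A ⊕ (C ⊕ D) → A ⊕ (B ⊕ (C ⊕ D)) := Sum.map id Sum.inr

/-- Embedding of `A ⊕ (B ⊕ C)` into the big type. -/
def E5 : A ⊕ (B ⊕ C) → A ⊕ (B ⊕ (C ⊕ D)) := Sum.map id (Sum.map id Sum.inl)

lemma E2_left (u : A ⊕ B) :
    E2 (C := C) (D := D) (Sum.map id Sum.inl u) = Sum.map id Sum.inl u := by
  cases u <;> rfl

lemma E5_left (u : A ⊕ B) :
    E5 (C := C) (D := D) (Sum.map id Sum.inl u) = Sum.map id Sum.inl u := by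
  cases u <;> rfl

lemma E4_E5 (u : A ⊕ C) :
    E4 (B := B) (D := D) (Sum.map id Sum.inl u) = E5 (Sum.map id Sum.inr u) := by
  cases u <;> rfl

lemma E2_inj {u v : A ⊕ (B ⊕ D)} (h : E2 (C := C) u = E2 v) : u = v := by
  rcases u with a | (b | d) <;> rcases v with a' | (b' | d') <;> simp_all [E2]

lemma E4_inj {u v : A ⊕ (C ⊕ D)} (h : E4 (B := B) u = E4 v) : u = v := by
  rcases u with a | w <;> rcases v with a' | w' <;> simp_all [E4]

lemma E2_eq_left {u : A ⊕ (B ⊕ D)} {p : A ⊕ B}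
    (h : E2 (C := C) u = Sum.map id Sum.inl p) : u = Sum.map id Sum.inl p := by
  rcases u with a | (b | d) <;> rcases p with a' | b' <;> simp_all [E2]

lemma E5_eq_left {z : A ⊕ (B ⊕ C)} {p : A ⊕ B}
    (h : E5 (D := D) z = Sum.map id Sum.inl p) : z = Sum.map id Sum.inl p := by
  rcases z with a | (b | c) <;> rcases p with a' | b' <;> simp_all [E5]

lemma E4_eq_left {u : A ⊕ (C ⊕ D)} {p : A ⊕ B}
    (h : E4 u = Sum.map id Sum.inl p) : ∃ a, u = Sum.inl a ∧ p = Sum.inl a := by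
  rcases u with a | w <;> rcases p with a' | b' <;> simp_all [E4]

lemma E4_eq_q {u : A ⊕ (C ⊕ D)} {p : B ⊕ C}
    (h : E4 u = Sum.inr (Sum.map id Sum.inl p)) :
    ∃ c₀, u = Sum.inr (Sum.inl c₀) ∧ p = Sum.inr c₀ := by
  rcases u with a | (c | d) <;> rcases p with b' | c' <;> simp_all [E4]

lemma E5_eq_q {z : A ⊕ (B ⊕ C)} {p : B ⊕ C}
    (h : E5 (D := D) z = Sum.inr (Sum.map id Sum.inl p)) : z = Sum.inr p := by
  rcases z with a | (b | c) <;> rcases p with b' | c' <;> simp_all [E5]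

lemma E4_eq_inr {u : A ⊕ (C ⊕ D)} {w : C ⊕ D}
    (h : E4 (B := B) u = Sum.inr (Sum.inr w)) : u = Sum.inr w := by
  rcases u with a | w' <;> simp_all [E4]

section

variable (P : A ⊕ B → A ⊕ B → Prop) (Q : B ⊕ C → B ⊕ C → Prop)
  (S : C ⊕ D → C ⊕ D → Prop)

lemma rhs_fwd {u v : A ⊕ (B ⊕ D)}
    (h : Relation.ReflTransGen (glue P (scomp Q S)) u v) :
    Relation.ReflTransGen (glue P (glue Q S)) (E2 u) (E2 v) := by
  induction h with
  | refl => exact .refl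
  | tail _ hstep ih =>
    refine ih.trans ?_
    rcases hstep with ⟨p, q, hpq, rfl, rfl⟩ | ⟨p, q, hpq, rfl, rfl⟩
    · rw [E2_left, E2_left]
      exact .single (Or.inl ⟨p, q, hpq, rfl, rfl⟩)
    · exact Relation.ReflTransGen.lift Sum.inr
        (fun a b h => Or.inr ⟨a, b, h, rfl, rfl⟩) _ _ hpq

lemma rhs_inv {u₀ : A ⊕ (B ⊕ D)} {ω : A ⊕ (B ⊕ (C ⊕ D))}
    (h : Relation.ReflTransGen (glue P (glue Q S)) (E2 u₀) ω) :
    (∃ u, Relation.ReflTransGen (glue P (scomp Q S)) u₀ u ∧ E2 u = ω) ∨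
    (∃ (u : B ⊕ D) (z : B ⊕ (C ⊕ D)),
      Relation.ReflTransGen (glue P (scomp Q S)) u₀ (Sum.inr u) ∧
      Relation.ReflTransGen (glue Q S) (Sum.map id Sum.inr u) z ∧
      Sum.inr z = ω) := by
  induction h with
  | refl => exact Or.inl ⟨u₀, .refl, rfl⟩
  | tail _ hstep ih =>
    rcases hstep with ⟨p, q, hpq, rfl, rfl⟩ | ⟨p, q, hpq, rfl, rfl⟩
    · -- P-step
      have h1 : ∃ u, Relation.ReflTransGen (glue P (scomp Q S)) u₀ u ∧
          E2 (C := C) u = Sum.map id Sum.inl p := by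
        rcases ih with ⟨u, hu, he⟩ | ⟨u, z, hu, hz, hze⟩
        · exact ⟨u, hu, he⟩
        · obtain ⟨b', rfl, rfl⟩ : ∃ b', p = Sum.inr b' ∧ z = Sum.inl b' := by
            rcases p with a | b'
            · simp at hze
            · exact ⟨b', rfl, by simpa using hze⟩
          have hs : scomp Q S u (Sum.inl b') := hz
          exact ⟨Sum.inr (Sum.inl b'),
            hu.tail (Or.inr ⟨u, Sum.inl b', hs, rfl, rfl⟩), rfl⟩
      obtain ⟨u, hu, he⟩ := h1
      obtain rfl := E2_eq_left he
      exact Or.inl ⟨Sum.map id Sum.inl q,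
        hu.tail (Or.inl ⟨p, q, hpq, rfl, rfl⟩), E2_left q⟩
    · -- glue Q S step
      rcases ih with ⟨u, hu, he⟩ | ⟨u, z, hu, hz, hze⟩
      · obtain ⟨w, rfl, rfl⟩ : ∃ w, u = Sum.inr w ∧ p = Sum.map id Sum.inr w := by
          rcases u with a | w
          · simp [E2] at he
          · exact ⟨w, rfl, by simpa [E2] using he.symm⟩
        exact Or.inr ⟨w, q, hu, .single hpq, rfl⟩
      · obtain rfl : z = p := by injection hze
        exact Or.inr ⟨u, q, hu, hz.tail hpq, rfl⟩

lemma rhs_bwd {u v : A ⊕ (B ⊕ D)}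
    (h : Relation.ReflTransGen (glue P (glue Q S)) (E2 u) (E2 v)) :
    Relation.ReflTransGen (glue P (scomp Q S)) u v := by
  rcases rhs_inv P Q S h with ⟨u', hu, he⟩ | ⟨u', z, hu, hz, hze⟩
  · obtain rfl := E2_inj he
    exact hu
  · rcases v with a | w
    · simp [E2] at hze
    · obtain rfl : z = Sum.map id Sum.inr w := by simpa [E2] using hze
      have hs : scomp Q S u' w := hz
      exact hu.tail (Or.inr ⟨u', w, hs, rfl, rfl⟩)

lemma lhs_fwd {u v : A ⊕ (C ⊕ D)}
    (h : Relation.ReflTransGen (glue (scomp P Q) S) u v) :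
    Relation.ReflTransGen (glue P (glue Q S)) (E4 u) (E4 v) := by
  induction h with
  | refl => exact .refl
  | tail _ hstep ih =>
    refine ih.trans ?_
    rcases hstep with ⟨p, q, hpq, rfl, rfl⟩ | ⟨p, q, hpq, rfl, rfl⟩
    · rw [E4_E5, E4_E5]
      refine Relation.ReflTransGen.lift E5 (fun x y hxy => show glue P (glue Q S) (E5 x) (E5 y) from ?_) _ _ hpq
      rcases hxy with ⟨p', q', h', rfl, rfl⟩ | ⟨p', q', h', rfl, rfl⟩
      · rw [E5_left, E5_left]
        exact Or.inl ⟨p', q', h', rfl, rfl⟩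
      · exact Or.inr ⟨Sum.map id Sum.inl p', Sum.map id Sum.inl q',
          Or.inl ⟨p', q', h', rfl, rfl⟩, rfl, rfl⟩
    · exact .single (Or.inr ⟨Sum.inr p, Sum.inr q,
        Or.inr ⟨p, q, hpq, rfl, rfl⟩, rfl, rfl⟩)

lemma lhs_inv {u₀ : A ⊕ (C ⊕ D)} {ω : A ⊕ (B ⊕ (C ⊕ D))}
    (h : Relation.ReflTransGen (glue P (glue Q S)) (E4 u₀) ω) :
    (∃ u, Relation.ReflTransGen (glue (scomp P Q) S) u₀ u ∧ E4 u = ω) ∨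
    (∃ (u : A ⊕ C) (z : A ⊕ (B ⊕ C)),
      Relation.ReflTransGen (glue (scomp P Q) S) u₀ (Sum.map id Sum.inl u) ∧
      Relation.ReflTransGen (glue P Q) (Sum.map id Sum.inr u) z ∧
      E5 z = ω) := by
  induction h with
  | refl => exact Or.inl ⟨u₀, .refl, rfl⟩
  | tail _ hstep ih =>
    rcases hstep with ⟨p, q, hpq, rfl, rfl⟩ | ⟨p, q, hQS, rfl, rfl⟩
    · -- P-step
      rcases ih with ⟨u, hu, he⟩ | ⟨u, z, hu, hz, hze⟩
      · obtain ⟨a, rfl, rfl⟩ := E4_eq_left he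
        refine Or.inr ⟨Sum.inl a, Sum.map id Sum.inl q, hu, ?_, E5_left q⟩
        exact .single (Or.inl ⟨Sum.inl a, q, hpq, rfl, rfl⟩)
      · obtain rfl := E5_eq_left hze
        exact Or.inr ⟨u, Sum.map id Sum.inl q, hu,
          hz.tail (Or.inl ⟨p, q, hpq, rfl, rfl⟩), E5_left q⟩
    · rcases hQS with ⟨p', q', h', rfl, rfl⟩ | ⟨p', q', h', rfl, rfl⟩
      · -- Q-step
        rcases ih with ⟨u, hu, he⟩ | ⟨u, z, hu, hz, hze⟩
        · obtain ⟨c₀, rfl, rfl⟩ := E4_eq_q he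
          refine Or.inr ⟨Sum.inr c₀, Sum.inr q', hu, ?_, rfl⟩
          exact .single (Or.inr ⟨Sum.inr c₀, q', h', rfl, rfl⟩)
        · obtain rfl := E5_eq_q hze
          exact Or.inr ⟨u, Sum.inr q', hu,
            hz.tail (Or.inr ⟨p', q', h', rfl, rfl⟩), rfl⟩
      · -- S-step
        have h1 : ∃ u, Relation.ReflTransGen (glue (scomp P Q) S) u₀ u ∧
            E4 (B := B) u = Sum.inr (Sum.inr p') := by
          rcases ih with ⟨u, hu, he⟩ | ⟨u, z, hu, hz, hze⟩
          · exact ⟨u, hu, he⟩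
          · obtain ⟨c₀, rfl, rfl⟩ :
                ∃ c₀, z = Sum.inr (Sum.inr c₀) ∧ p' = Sum.inl c₀ := by
              rcases z with a | (b | c2)
              · simp [E5] at hze
              · simp [E5] at hze
              · rcases p' with c' | d'
                · obtain rfl : c2 = c' := by simpa [E5] using hze
                  exact ⟨c2, rfl, rfl⟩
                · simp [E5] at hze
            have hs : scomp P Q u (Sum.inr c₀) := hz
            exact ⟨Sum.inr (Sum.inl c₀),
              hu.tail (Or.inl ⟨u, Sum.inr c₀, hs, rfl, rfl⟩), rfl⟩
        obtain ⟨u, hu, he⟩ := h1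
        obtain rfl := E4_eq_inr he
        exact Or.inl ⟨Sum.inr q',
          hu.tail (Or.inr ⟨p', q', h', rfl, rfl⟩), rfl⟩

lemma lhs_bwd {u v : A ⊕ (C ⊕ D)}
    (h : Relation.ReflTransGen (glue P (glue Q S)) (E4 u) (E4 v)) :
    Relation.ReflTransGen (glue (scomp P Q) S) u v := by
  rcases lhs_inv P Q S h with ⟨u', hu, he⟩ | ⟨u', z, hu, hz, hze⟩
  · obtain rfl := E4_inj he
    exact hu
  · rcases v with a | (c | d)
    · obtain rfl : z = Sum.inl a := by
        rcases z with a' | (b' | c') <;> simp_all [E5, E4]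
      have hs : scomp P Q u' (Sum.inl a) := hz
      exact hu.tail (Or.inl ⟨u', Sum.inl a, hs, rfl, rfl⟩)
    · obtain rfl : z = Sum.inr (Sum.inr c) := by
        rcases z with a' | (b' | c') <;> simp_all [E5, E4]
      have hs : scomp P Q u' (Sum.inr c) := hz
      exact hu.tail (Or.inl ⟨u', Sum.inr c, hs, rfl, rfl⟩)
    · exfalso
      rcases z with a' | (b' | c') <;> simp [E5, E4] at hze

end

end SPAssoc

theorem stmt6 (P : A ⊕ B → A ⊕ B → Prop) (Q : B ⊕ C → B ⊕ C → Prop)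
    (S : C ⊕ D → C ⊕ D → Prop)
    (hPr : Reflexive P) (hPt : Transitive P)
    (hQr : Reflexive Q) (hQt : Transitive Q)
    (hSr : Reflexive S) (hSt : Transitive S) :
    scomp (scomp P Q) S = scomp P (scomp Q S) := by
  funext x y
  apply propext
  have key : ∀ w : A ⊕ D,
      SPAssoc.E4 (B := B) (Sum.map id Sum.inr w) =
        SPAssoc.E2 (C := C) (Sum.map id Sum.inr w) := by
    rintro (a | d) <;> rfl
  constructor
  · intro h
    have h' := SPAssoc.lhs_fwd P Q S h
    rw [key, key] at h'
    exact SPAssoc.rhs_bwd P Q S h'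
  · intro h
    have h' := SPAssoc.rhs_fwd P Q S h
    rw [← key, ← key] at h'
    exact SPAssoc.lhs_bwd P Q S h'
end

section
/- The assignment f ↦ f_{A₁,B₂} of split equivalences to functions preserves composition: for f : A → B and g : B → C, (g ∘ f)_{A₁,C₂} = g_{B₁,C₂} ∘ f_{A₁,B₂}, where the right-hand composition is composition of split preorders. -/
universe u

variable {A B C D : Type u}

/-- The split equivalence induced by a function `f : A → B`: it relates `(a,1)`
with `(f a,2)` in both directions, relates `(a,1)` with `(a',1)` whenever
`f a = f a'`, and contains all reflexive pairs on `B₂`. -/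
def funSpl {A B : Type u} (f : A → B) : A ⊕ B → A ⊕ B → Prop := fun x y =>
  (∃ a b, x = Sum.inl a ∧ y = Sum.inr b ∧ f a = b) ∨
  (∃ a b, x = Sum.inr b ∧ y = Sum.inl a ∧ f a = b) ∨
  (∃ a a', x = Sum.inl a ∧ y = Sum.inl a' ∧ f a = f a') ∨
  (∃ b, x = Sum.inr b ∧ y = Sum.inr b)

private def Fval (f : A → B) (g : B → C) : A ⊕ (B ⊕ C) → C
  | Sum.inl a => g (f a)
  | Sum.inr (Sum.inl b) => g b
  | Sum.inr (Sum.inr c) => c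

private lemma glue_Fval (f : A → B) (g : B → C) {x y : A ⊕ (B ⊕ C)}
    (h : glue (funSpl f) (funSpl g) x y) : Fval f g x = Fval f g y := by
  rcases h with ⟨u, v, hP, hx, hy⟩ | ⟨u, v, hQ, hx, hy⟩
  · subst hx hy
    rcases hP with ⟨a, b, rfl, rfl, rfl⟩ | ⟨a, b, rfl, rfl, rfl⟩ |
      ⟨a, a', rfl, rfl, h⟩ | ⟨b, rfl, rfl⟩ <;> simp_all [Fval]
  · subst hx hy
    rcases hQ with ⟨a, b, rfl, rfl, rfl⟩ | ⟨a, b, rfl, rfl, rfl⟩ |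
      ⟨a, a', rfl, rfl, h⟩ | ⟨b, rfl, rfl⟩ <;> simp_all [Fval]

private lemma rtg_Fval (f : A → B) (g : B → C) {x y : A ⊕ (B ⊕ C)}
    (h : Relation.ReflTransGen (glue (funSpl f) (funSpl g)) x y) :
    Fval f g x = Fval f g y := by
  induction h with
  | refl => rfl
  | tail _ hstep ih => exact ih.trans (glue_Fval f g hstep)

theorem stmt12 (f : A → B) (g : B → C) :
    funSpl (g ∘ f) = scomp (funSpl f) (funSpl g) := by
  funext x y
  apply propext
  constructor
  · intro h
    rcases h with ⟨a, c, rfl, rfl, rfl⟩ | ⟨a, c, rfl, rfl, rfl⟩ |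
      ⟨a, a', rfl, rfl, h⟩ | ⟨c, rfl, rfl⟩
    · -- inl a → inr c with g (f a) = c
      refine Relation.ReflTransGen.trans
        (Relation.ReflTransGen.single (Or.inl ⟨Sum.inl a, Sum.inr (f a),
          Or.inl ⟨a, f a, rfl, rfl, rfl⟩, rfl, rfl⟩)) ?_
      exact Relation.ReflTransGen.single (Or.inr ⟨Sum.inl (f a), Sum.inr (g (f a)),
        Or.inl ⟨f a, g (f a), rfl, rfl, rfl⟩, rfl, rfl⟩)
    · refine Relation.ReflTransGen.trans
        (Relation.ReflTransGen.single (Or.inr ⟨Sum.inr (g (f a)), Sum.inl (f a),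
          Or.inr (Or.inl ⟨f a, g (f a), rfl, rfl, rfl⟩), rfl, rfl⟩)) ?_
      exact Relation.ReflTransGen.single (Or.inl ⟨Sum.inr (f a), Sum.inl a,
        Or.inr (Or.inl ⟨a, f a, rfl, rfl, rfl⟩), rfl, rfl⟩)
    · refine Relation.ReflTransGen.trans (Relation.ReflTransGen.single
        (Or.inl ⟨Sum.inl a, Sum.inr (f a), Or.inl ⟨a, f a, rfl, rfl, rfl⟩, rfl, rfl⟩)) ?_
      refine Relation.ReflTransGen.trans (Relation.ReflTransGen.single
        (Or.inr ⟨Sum.inl (f a), Sum.inl (f a'),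
          Or.inr (Or.inr (Or.inl ⟨f a, f a', rfl, rfl, h⟩)), rfl, rfl⟩)) ?_
      exact Relation.ReflTransGen.single
        (Or.inl ⟨Sum.inr (f a'), Sum.inl a', Or.inr (Or.inl ⟨a', f a', rfl, rfl, rfl⟩), rfl, rfl⟩)
    · exact Relation.ReflTransGen.refl
  · intro h
    have hF : Fval f g (Sum.map id Sum.inr x) = Fval f g (Sum.map id Sum.inr y) :=
      rtg_Fval f g h
    cases x with
    | inl a =>
      cases y with
      | inl a' => exact Or.inr (Or.inr (Or.inl ⟨a, a', rfl, rfl, hF⟩))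
      | inr c => exact Or.inl ⟨a, c, rfl, rfl, hF⟩
    | inr c =>
      cases y with
      | inl a' => exact Or.inr (Or.inl ⟨a', c, rfl, rfl, hF.symm⟩)
      | inr c' =>
        have : c = c' := hF
        exact this ▸ Or.inr (Or.inr (Or.inr ⟨c, rfl, rfl⟩))
end

section
/- The category Rel of binary relations between finite ordinals is maximal in the following sense: if v, w : n → m are two distinct relations, then the smallest congruence on Rel (compatible with composition and the biproduct structure +) identifying v and w identifies all parallel pairs of arrows, i.e., forces 1₁ = 0^{1,1} and hence collapses Rel to a preorder. -/
/-- An arrow of `Rel` from `n` to `m`: a binary relation between `Fin n` and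
`Fin m`. -/
abbrev RelArrow (n m : ℕ) := Fin n → Fin m → Prop

/-- Composition of relations (diagrammatic order). -/
def rcomp {n m k : ℕ} (R : RelArrow n m) (S : RelArrow m k) : RelArrow n k :=
  fun i j => ∃ p, R i p ∧ S p j

/-- The empty relation `0^{n,m}`. -/
def zeroRel (n m : ℕ) : RelArrow n m := fun _ _ => False

/-- The identity relation `1ₙ`. -/
def oneRel (n : ℕ) : RelArrow n n := fun i j => i = j

/-- The biproduct `f + g` of relations. -/
def plusRel {n m k l : ℕ} (f : RelArrow n m) (g : RelArrow k l) :
    RelArrow (n + k) (m + l) := fun i j =>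
  (∃ i' j', i = Fin.castAdd k i' ∧ j = Fin.castAdd l j' ∧ f i' j') ∨
  (∃ i' j', i = Fin.natAdd n i' ∧ j = Fin.natAdd m j' ∧ g i' j')

/-- The diagonal `Δ^n : n → n + n`, relating `i` to both of its copies. -/
def diag (n : ℕ) : RelArrow n (n + n) := fun i j =>
  j = Fin.castAdd n i ∨ j = Fin.natAdd n i

/-- The codiagonal `∇^m : m + m → m`, relating both copies of `j` to `j`. -/
def codiag (m : ℕ) : RelArrow (m + m) m := fun j i =>
  j = Fin.castAdd m i ∨ j = Fin.natAdd m i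

/-- Union of parallel arrows defined by the biproduct structure:
`f ∪ g = ∇^m ∘ (f + g) ∘ Δ^n`. -/
def runion {n m : ℕ} (f g : RelArrow n m) : RelArrow n m :=
  rcomp (rcomp (diag n) (plusRel f g)) (codiag m)

lemma one_rcomp {k l : ℕ} (f : RelArrow k l) : rcomp (oneRel k) f = f := by
  funext i j; simp [rcomp, oneRel]

lemma rcomp_one {k l : ℕ} (f : RelArrow k l) : rcomp f (oneRel l) = f := by
  funext i j; simp [rcomp, oneRel]

lemma zero_rcomp {k l p : ℕ} (f : RelArrow k l) : rcomp (zeroRel p k) f = zeroRel p l := by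
  funext i j; simp [rcomp, zeroRel]

lemma plusRel_one_one (k : ℕ) : plusRel (oneRel k) (oneRel 1) = oneRel (k + 1) := by
  funext i j
  apply propext
  constructor
  · rintro (⟨i', j', rfl, rfl, h⟩ | ⟨i', j', rfl, rfl, h⟩) <;> (cases h; rfl)
  · rintro (rfl : i = j)
    induction i using Fin.lastCases with
    | last =>
      right
      refine ⟨0, 0, ?_, ?_, rfl⟩ <;> (apply Fin.ext; simp)
    | cast i' =>
      left
      exact ⟨i', i', rfl, rfl, rfl⟩

/-- The "keep only the last coordinate" endo-relation on `Fin (k+1)`. -/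
def lastRel (k : ℕ) : RelArrow (k + 1) (k + 1) := plusRel (zeroRel k k) (oneRel 1)

lemma lastRel_iff (k : ℕ) (i j : Fin (k + 1)) :
    lastRel k i j ↔ i = Fin.last k ∧ j = Fin.last k := by
  constructor
  · rintro (⟨i', j', rfl, rfl, h⟩ | ⟨i', j', rfl, rfl, h⟩)
    · exact h.elim
    · obtain rfl : i' = (0 : Fin 1) := Subsingleton.elim _ _
      obtain rfl : j' = (0 : Fin 1) := Subsingleton.elim _ _
      constructor <;> (apply Fin.ext; simp)
  · rintro ⟨rfl, rfl⟩
    right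
    refine ⟨0, 0, ?_, ?_, rfl⟩ <;> (apply Fin.ext; simp)

/-- The swap of the first and last coordinates, as a relation. -/
def swapRel (k : ℕ) : RelArrow (k + 1 + 1) (k + 1 + 1) :=
  fun i j => j = Equiv.swap 0 (Fin.last (k + 1)) i

lemma swapRel_swapRel (k : ℕ) : rcomp (swapRel k) (swapRel k) = oneRel (k + 1 + 1) := by
  funext i j
  apply propext
  constructor
  · rintro ⟨p, (rfl : p = _), (rfl : j = _)⟩
    exact (Equiv.swap_apply_self _ _ i).symm
  · rintro (rfl : i = j)
    exact ⟨_, rfl, (Equiv.swap_apply_self _ _ i).symm⟩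

/-- The "keep only the first coordinate" relation, conjugate of `lastRel`. -/
def firstRel (k : ℕ) : RelArrow (k + 1 + 1) (k + 1 + 1) :=
  rcomp (rcomp (swapRel k) (lastRel (k + 1))) (swapRel k)

lemma lastRel_firstRel (k : ℕ) :
    rcomp (lastRel (k + 1)) (firstRel k) = zeroRel (k + 1 + 1) (k + 1 + 1) := by
  funext i j
  apply propext
  constructor
  · rintro ⟨p, hBp, q, ⟨r, (rfl : r = _), hBq⟩, (rfl : j = _)⟩
    have hp : p = Fin.last (k + 1) := ((lastRel_iff _ _ _).1 hBp).2
    have hep : Equiv.swap (0 : Fin (k + 1 + 1)) (Fin.last (k + 1)) p = Fin.last (k + 1) :=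
      ((lastRel_iff _ _ _).1 hBq).1
    rw [hp, Equiv.swap_apply_right] at hep
    exact absurd (congrArg Fin.val hep.symm) (by simp)
  · rintro ⟨⟩

theorem stmt17 (n m : ℕ) (v w : RelArrow n m) (hvw : v ≠ w)
    (Cong : ∀ k l : ℕ, RelArrow k l → RelArrow k l → Prop)
    (hequiv : ∀ k l, Equivalence (Cong k l))
    (hcompL : ∀ (k l p : ℕ) (f g : RelArrow k l) (h : RelArrow p k),
      Cong k l f g → Cong p l (rcomp h f) (rcomp h g))
    (hcompR : ∀ (k l p : ℕ) (f g : RelArrow k l) (h : RelArrow l p),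
      Cong k l f g → Cong k p (rcomp f h) (rcomp g h))
    (hplusL : ∀ (k l : ℕ) (f g : RelArrow k l),
      Cong k l f g → Cong (1 + k) (1 + l) (plusRel (oneRel 1) f) (plusRel (oneRel 1) g))
    (hplusR : ∀ (k l : ℕ) (f g : RelArrow k l),
      Cong k l f g → Cong (k + 1) (l + 1) (plusRel f (oneRel 1)) (plusRel g (oneRel 1)))
    (hvw' : Cong n m v w) :
    Cong 1 1 (oneRel 1) (zeroRel 1 1) ∧
    ∀ (k l : ℕ) (f g : RelArrow k l), Cong k l f g := by
  classical
  -- Step 1: collapse at dimension 1.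
  have key1 : ∀ (v w : RelArrow n m), Cong n m v w → ∀ i j, v i j → ¬ w i j →
      Cong 1 1 (oneRel 1) (zeroRel 1 1) := by
    intro v w hc i j hv hw
    have h1 : rcomp (rcomp ((fun _ p => p = i) : RelArrow 1 n) v)
        ((fun q _ => q = j) : RelArrow m 1) = oneRel 1 := by
      funext x y
      apply propext
      constructor
      · intro _; exact Subsingleton.elim x y
      · intro _; exact ⟨j, ⟨i, rfl, hv⟩, rfl⟩
    have h2 : rcomp (rcomp ((fun _ p => p = i) : RelArrow 1 n) w)
        ((fun q _ => q = j) : RelArrow m 1) = zeroRel 1 1 := by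
      funext x y
      apply propext
      constructor
      · rintro ⟨q, ⟨p, (rfl : p = i), hwp⟩, (rfl : q = j)⟩; exact hw hwp
      · rintro ⟨⟩
    have h := hcompR _ _ _ _ _ ((fun q _ => q = j) : RelArrow m 1)
      (hcompL _ _ 1 _ _ ((fun _ p => p = i) : RelArrow 1 n) hc)
    rwa [h1, h2] at h
  have h11 : Cong 1 1 (oneRel 1) (zeroRel 1 1) := by
    have hne : ∃ i j, ¬ (v i j ↔ w i j) := by
      by_contra h
      push_neg at h
      exact hvw (funext fun i => funext fun j => propext (h i j))
    obtain ⟨i, j, hij⟩ := hne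
    by_cases hv : v i j
    · exact key1 v w hvw' i j hv (fun hwv => hij ⟨fun _ => hwv, fun _ => hv⟩)
    · have hw : w i j := by
        by_contra hw
        exact hij ⟨fun h => absurd h hv, fun h => absurd h hw⟩
      exact key1 w v ((hequiv n m).symm hvw') i j hw hv
  refine ⟨h11, ?_⟩
  -- Step 2: collapse identities at every dimension.
  have key : ∀ k, Cong k k (oneRel k) (zeroRel k k) := by
    intro k
    induction k with
    | zero =>
      have h0 : oneRel 0 = zeroRel 0 0 := by funext i; exact i.elim0
      rw [h0]; exact (hequiv 0 0).refl _
    | succ k ih =>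
      cases k with
      | zero => exact h11
      | succ k' =>
        have hB : Cong (k' + 1 + 1) (k' + 1 + 1) (oneRel (k' + 1 + 1)) (lastRel (k' + 1)) := by
          have h := hplusR _ _ _ _ ih
          rwa [plusRel_one_one] at h
        have hC : Cong (k' + 1 + 1) (k' + 1 + 1) (oneRel (k' + 1 + 1)) (firstRel k') := by
          have h := hcompR _ _ _ _ _ (swapRel k')
            (hcompL _ _ _ _ _ (swapRel k') hB)
          rwa [rcomp_one, swapRel_swapRel] at h
        have h1 : Cong (k' + 1 + 1) (k' + 1 + 1)
            (rcomp (lastRel (k' + 1)) (firstRel k'))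
            (rcomp (oneRel (k' + 1 + 1)) (firstRel k')) :=
          hcompR _ _ _ _ _ (firstRel k') ((hequiv _ _).symm hB)
        rw [lastRel_firstRel, one_rcomp] at h1
        exact (hequiv _ _).trans hC ((hequiv _ _).symm h1)
  -- Step 3: every relation is congruent to the zero relation.
  intro k l f g
  have hz : ∀ f : RelArrow k l, Cong k l f (zeroRel k l) := by
    intro f
    have h := hcompR _ _ _ _ _ f (key k)
    rwa [one_rcomp, zero_rcomp] at h
  exact (hequiv _ _).trans (hz f) ((hequiv _ _).symm (hz g))
end
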